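/- Let T ⊆ ℝ, t₀ ∈ T, X₀ ∈ c(M), and F : T → c(M) with V(F,T) < +∞ (Jordan variation w.r.t. the Hausdorff metric). Then there exists a set-valued selector Γ : T → c(M) of F on T such that d_H(X₀, Γ(t₀)) ≤ e(X₀, F(t₀)) and V(Γ,T) ≤ V⁺(F, T∩[t₀,+∞)) + V⁻(F, T∩(-∞,t₀]) ≤ V(F,T). -/

import Mathlib

open Set Metric EMetric Filter
open scoped ENNReal Pointwise

noncomputable def exc {M : Type*} [MetricSpace M] (X Y : Set M) : ℝ≥0∞ :=
  ⨆ x ∈ X, EMetric.infEdist x Y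

noncomputable def varBy {M : Type*} [MetricSpace M]
    (D : Set M → Set M → ℝ≥0∞) (F : ℝ → Set M) (T : Set ℝ) : ℝ≥0∞ :=
  ⨆ p : {p : ℕ × (ℕ → ℝ) // Monotone p.2 ∧ ∀ i, p.2 i ∈ T},
    ∑ i ∈ Finset.range p.1.1, D (F (p.1.2 i)) (F (p.1.2 (i + 1)))

noncomputable def varPlus {M : Type*} [MetricSpace M] (F : ℝ → Set M) (T : Set ℝ) : ℝ≥0∞ :=
  varBy exc F T

noncomputable def varMinus {M : Type*} [MetricSpace M] (F : ℝ → Set M) (T : Set ℝ) : ℝ≥0∞ :=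
  varBy (fun X Y => exc Y X) F T

noncomputable def varH {M : Type*} [MetricSpace M] (F : ℝ → Set M) (T : Set ℝ) : ℝ≥0∞ :=
  varBy EMetric.hausdorffEdist F T

section VarLemmas

variable {M : Type*} [MetricSpace M] {D D₁ D₂ : Set M → Set M → ℝ≥0∞} {F : ℝ → Set M}

lemma exc_le_iff {X Y : Set M} {r : ℝ≥0∞} : exc X Y ≤ r ↔ ∀ x ∈ X, infEdist x Y ≤ r :=
  iSup₂_le_iff

lemma infEdist_le_exc {X Y : Set M} {x : M} (hx : x ∈ X) : infEdist x Y ≤ exc X Y :=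
  le_iSup₂ (f := fun x _ => infEdist x Y) x hx

lemma exc_le_hausdorffEdist {X Y : Set M} : exc X Y ≤ hausdorffEdist X Y := by
  rw [hausdorffEdist, hausdorffEdist_def]
  exact le_trans le_rfl le_sup_left

lemma exc_rev_le_hausdorffEdist {X Y : Set M} : exc Y X ≤ hausdorffEdist X Y := by
  rw [hausdorffEdist, hausdorffEdist_comm, hausdorffEdist_def]
  exact le_sup_left

lemma exc_self {X : Set M} : exc X X = 0 := by
  refine le_antisymm (exc_le_iff.2 fun x hx => ?_) zero_le
  simp [infEdist, infEdist_zero_of_mem hx]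

lemma varBy_mono_set {S S' : Set ℝ} (h : S ⊆ S') : varBy D F S ≤ varBy D F S' := by
  refine iSup_le fun p => ?_
  exact le_iSup_of_le ⟨p.1, p.2.1, fun i => h (p.2.2 i)⟩ le_rfl

lemma pair_le_varBy {S : Set ℝ} {a b : ℝ} (ha : a ∈ S) (hb : b ∈ S) (hab : a ≤ b) :
    D (F a) (F b) ≤ varBy D F S := by
  have hm : Monotone (fun i : ℕ => if i = 0 then a else b) := by
    intro i j hij
    dsimp only
    by_cases hi : i = 0 <;> by_cases hj : j = 0 <;> simp [hi, hj, hab]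
    · omega
  refine le_trans ?_ (le_iSup _ ⟨(1, fun i => if i = 0 then a else b), hm, fun i => by
    dsimp only; split <;> assumption⟩)
  simp

lemma varBy_mono_D {S : Set ℝ}
    (h : ∀ a ∈ S, ∀ b ∈ S, a ≤ b → D₁ (F a) (F b) ≤ D₂ (F a) (F b)) :
    varBy D₁ F S ≤ varBy D₂ F S := by
  refine iSup_le fun p => le_iSup_of_le ⟨p.1, p.2⟩ ?_
  exact Finset.sum_le_sum fun i _ =>
    h _ (p.2.2 i) _ (p.2.2 (i + 1)) (p.2.1 (Nat.le_succ i))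

lemma varBy_zero_of_subsingleton {S : Set ℝ} {c : ℝ} (hS : ∀ x ∈ S, x = c)
    (hD : D (F c) (F c) = 0) : varBy D F S = 0 := by
  refine le_antisymm (iSup_le fun p => ?_) zero_le
  refine le_of_eq (Finset.sum_eq_zero fun i _ => ?_)
  rw [hS _ (p.2.2 i), hS _ (p.2.2 (i + 1)), hD]

lemma varBy_superadd {S₁ S₂ S : Set ℝ} (h₁ : S₁ ⊆ S) (h₂ : S₂ ⊆ S)
    (hle : ∀ x ∈ S₁, ∀ y ∈ S₂, x ≤ y) :
    varBy D F S₁ + varBy D F S₂ ≤ varBy D F S := by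
  by_cases hS₁ : S₁.Nonempty
  · by_cases hS₂ : S₂.Nonempty
    · obtain ⟨x₁, hx₁⟩ := hS₁
      obtain ⟨x₂, hx₂⟩ := hS₂
      have n₁ : Nonempty {p : ℕ × (ℕ → ℝ) // Monotone p.2 ∧ ∀ i, p.2 i ∈ S₁} :=
        ⟨⟨(0, fun _ => x₁), monotone_const, fun _ => hx₁⟩⟩
      have n₂ : Nonempty {p : ℕ × (ℕ → ℝ) // Monotone p.2 ∧ ∀ i, p.2 i ∈ S₂} :=
        ⟨⟨(0, fun _ => x₂), monotone_const, fun _ => hx₂⟩⟩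
      refine ENNReal.iSup_add_iSup_le fun p q => ?_
      obtain ⟨⟨n, u⟩, hu, huS⟩ := p
      obtain ⟨⟨m, v⟩, hv, hvS⟩ := q
      set w : ℕ → ℝ := fun i => if i ≤ n then u i else v (i - (n + 1)) with hw
      have hwm : Monotone w := by
        intro i j hij
        simp only [hw]
        by_cases hi : i ≤ n <;> by_cases hj : j ≤ n
        · rw [if_pos hi, if_pos hj]; exact hu hij
        · rw [if_pos hi, if_neg hj]; exact hle _ (huS i) _ (hvS _)
        · omega
        · rw [if_neg hi, if_neg hj]; exact hv (by omega)
      have hwS : ∀ i, w i ∈ S := by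
        intro i; simp only [hw]; split
        · exact h₁ (huS i)
        · exact h₂ (hvS _)
      refine le_trans ?_ (le_iSup _ ⟨(n + (1 + m), w), hwm, hwS⟩)
      show _ ≤ ∑ i ∈ Finset.range (n + (1 + m)), D (F (w i)) (F (w (i + 1)))
      rw [Finset.sum_range_add, Finset.sum_range_add]
      have e₁ : ∀ i ∈ Finset.range n, D (F (u i)) (F (u (i + 1)))
          = D (F (w i)) (F (w (i + 1))) := by
        intro i hi
        simp only [Finset.mem_range] at hi
        simp only [hw]
        rw [if_pos (by omega), if_pos (by omega)]
      have e₂ : ∀ i ∈ Finset.range m, D (F (v i)) (F (v (i + 1)))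
          = D (F (w (n + (1 + i)))) (F (w (n + (1 + i) + 1))) := by
        intro i hi
        simp only [hw]
        rw [if_neg (by omega : ¬ n + (1 + i) ≤ n), if_neg (by omega : ¬ n + (1 + i) + 1 ≤ n)]
        have g₁ : n + (1 + i) - (n + 1) = i := by omega
        have g₂ : n + (1 + i) + 1 - (n + 1) = i + 1 := by omega
        rw [g₁, g₂]
      rw [Finset.sum_congr rfl e₁, Finset.sum_congr rfl e₂]
      refine add_le_add le_rfl ?_
      exact le_add_self
    · have : varBy D F S₂ = 0 := by
        have : IsEmpty {p : ℕ × (ℕ → ℝ) // Monotone p.2 ∧ ∀ i, p.2 i ∈ S₂} :=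
          ⟨fun p => hS₂ ⟨p.1.2 0, p.2.2 0⟩⟩
        simp [varBy, iSup_of_empty]
      rw [this, add_zero]
      exact varBy_mono_set h₁
  · have : varBy D F S₁ = 0 := by
      have : IsEmpty {p : ℕ × (ℕ → ℝ) // Monotone p.2 ∧ ∀ i, p.2 i ∈ S₁} :=
        ⟨fun p => hS₁ ⟨p.1.2 0, p.2.2 0⟩⟩
      simp [varBy, iSup_of_empty]
    rw [this, zero_add]
    exact varBy_mono_set h₂

lemma sum_varBy_le {S : Set ℝ} {a : ℕ → ℝ} (ha : Monotone a) (haS : ∀ i, a i ∈ S) (n : ℕ) :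
    ∑ i ∈ Finset.range n, varBy D F (S ∩ Icc (a i) (a (i + 1))) ≤ varBy D F S := by
  have key : ∀ n, ∑ i ∈ Finset.range n, varBy D F (S ∩ Icc (a i) (a (i + 1)))
      ≤ varBy D F (S ∩ Icc (a 0) (a n)) := by
    intro n
    induction n with
    | zero => simp
    | succ n ih =>
      rw [Finset.sum_range_succ]
      refine le_trans (add_le_add ih le_rfl) ?_
      refine varBy_superadd ?_ ?_ ?_
      · exact fun x hx => ⟨hx.1, hx.2.1, le_trans hx.2.2 (ha (Nat.le_succ n))⟩
      · exact fun x hx => ⟨hx.1, le_trans (ha (Nat.zero_le n)) hx.2.1, hx.2.2⟩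
      · exact fun x hx y hy => le_trans hx.2.2 hy.2.1
  exact le_trans (key n) (varBy_mono_set inter_subset_left)

lemma varPlus_reflect (F : ℝ → Set M) (S : Set ℝ) (c : ℝ) :
    varPlus (fun x => F (c - x)) ((fun x : ℝ => c - x) ⁻¹' S) ≤ varMinus F S := by
  refine iSup_le fun p => ?_
  obtain ⟨⟨n, u⟩, hu, huS⟩ := p
  set v : ℕ → ℝ := fun j => c - u (n - j) with hvdef
  have hv : Monotone v := by
    intro j k hjk
    have := hu (Nat.sub_le_sub_left hjk n)
    simp only [hvdef]
    linarith
  have hvS : ∀ j, v j ∈ S := fun j => huS (n - j)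
  refine le_trans ?_ (le_iSup _ ⟨(n, v), hv, hvS⟩)
  show _ ≤ ∑ j ∈ Finset.range n, exc (F (v (j + 1))) (F (v j))
  rw [← Finset.sum_range_reflect (fun j => exc (F (v (j + 1))) (F (v j))) n]
  refine le_of_eq (Finset.sum_congr rfl fun j hj => ?_)
  simp only [Finset.mem_range] at hj
  have e₁ : n - 1 - j + 1 = n - j := by omega
  have e₂ : n - (n - j) = j := by omega
  have e₃ : n - (n - 1 - j) = j + 1 := by omega
  rw [e₁]
  simp only [hvdef]
  rw [e₂, e₃]

end VarLemmas
open scoped List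

section OneSided

variable {M : Type*} [MetricSpace M]

noncomputable def vp (T : Set ℝ) (F : ℝ → Set M) (a b : ℝ) : ℝ≥0∞ :=
  varPlus F (T ∩ Icc a b)

def stepS (T : Set ℝ) (F : ℝ → Set M) (r : ℝ) (A : Set M) (s : ℝ) : Set M :=
  {y | y ∈ F s ∧ infEdist y A ≤ vp T F r s}

def reachA (T : Set ℝ) (F : ℝ → Set M) : ℝ → Set M → List ℝ → Set M
  | _, A, [] => A
  | r, A, s :: l => reachA T F s (stepS T F r A s) l

def lastP (r : ℝ) : List ℝ → ℝ
  | [] => r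
  | s :: l => lastP s l

@[simp] lemma reachA_nil (T : Set ℝ) (F : ℝ → Set M) (r : ℝ) (A : Set M) :
    reachA T F r A [] = A := rfl

@[simp] lemma reachA_cons (T : Set ℝ) (F : ℝ → Set M) (r : ℝ) (A : Set M) (s : ℝ) (l : List ℝ) :
    reachA T F r A (s :: l) = reachA T F s (stepS T F r A s) l := rfl

@[simp] lemma lastP_nil (r : ℝ) : lastP r [] = r := rfl

@[simp] lemma lastP_cons (r s : ℝ) (l : List ℝ) : lastP r (s :: l) = lastP s l := rfl

lemma lastP_append (r : ℝ) (l m : List ℝ) : lastP r (l ++ m) = lastP (lastP r l) m := by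
  induction l generalizing r with
  | nil => rfl
  | cons s l ih => simp [ih]

lemma lastP_concat (r s : ℝ) (l : List ℝ) : lastP r (l ++ [s]) = s := by
  rw [lastP_append]; rfl

lemma reachA_append (T : Set ℝ) (F : ℝ → Set M) (r : ℝ) (A : Set M) (l m : List ℝ) :
    reachA T F r A (l ++ m) = reachA T F (lastP r l) (reachA T F r A l) m := by
  induction l generalizing r A with
  | nil => rfl
  | cons s l ih => simp [ih]

lemma le_lastP {r : ℝ} {l : List ℝ} (h : (r :: l).Chain' (· ≤ ·)) : r ≤ lastP r l := by
  induction l generalizing r with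
  | nil => exact le_rfl
  | cons s l ih =>
    simp only [List.Chain', List.isChain_cons_cons] at h
    exact le_trans h.1 (ih h.2)

lemma lastP_mem {T : Set ℝ} {r : ℝ} {l : List ℝ} (hr : r ∈ T) (hl : ∀ x ∈ l, x ∈ T) :
    lastP r l ∈ T := by
  induction l generalizing r with
  | nil => exact hr
  | cons s l ih => exact ih (hl s (by simp)) fun x hx => hl x (by simp [hx])

variable {T : Set ℝ} {F : ℝ → Set M}

lemma stepS_subset {r s : ℝ} {A : Set M} : stepS T F r A s ⊆ F s := fun _ hy => hy.1

lemma stepS_compact (hF : ∀ t ∈ T, (F t).Nonempty ∧ IsCompact (F t)) {r s : ℝ} {A : Set M}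
    (hs : s ∈ T) : IsCompact (stepS T F r A s) :=
  (hF s hs).2.inter_right (IsClosed.preimage continuous_infEdist isClosed_Iic)

lemma exc_le_vp {a b : ℝ} (ha : a ∈ T) (hb : b ∈ T) (hab : a ≤ b) :
    exc (F a) (F b) ≤ vp T F a b :=
  pair_le_varBy ⟨ha, le_rfl, hab⟩ ⟨hb, hab, le_rfl⟩ hab

lemma vp_superadd {a b c : ℝ} (hab : a ≤ b) (hbc : b ≤ c) :
    vp T F a b + vp T F b c ≤ vp T F a c :=
  varBy_superadd (fun x hx => ⟨hx.1, hx.2.1, hx.2.2.trans hbc⟩)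
    (fun x hx => ⟨hx.1, hab.trans hx.2.1, hx.2.2⟩)
    (fun x hx y hy => hx.2.2.trans hy.2.1)

lemma vp_diag (a : ℝ) : vp T F a a = 0 :=
  varBy_zero_of_subsingleton (fun x hx => le_antisymm hx.2.2 hx.2.1) exc_self

lemma stepS_reach (hF : ∀ t ∈ T, (F t).Nonempty ∧ IsCompact (F t)) {r s : ℝ} {A : Set M}
    (hr : r ∈ T) (hs : s ∈ T) (hrs : r ≤ s) (hA : A ⊆ F r) :
    ∀ a ∈ A, ∃ y ∈ stepS T F r A s, edist a y ≤ vp T F r s := by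
  intro a ha
  have h1 : infEdist a (F s) ≤ vp T F r s :=
    le_trans (infEdist_le_exc (hA ha)) (exc_le_vp hr hs hrs)
  obtain ⟨y, hy, hey⟩ := (hF s hs).2.exists_infEdist_eq_edist (hF s hs).1 a
  have h2 : edist a y ≤ vp T F r s := hey ▸ h1
  refine ⟨y, ⟨hy, ?_⟩, h2⟩
  calc infEdist y A ≤ edist y a := infEdist_le_edist_of_mem ha
  _ = edist a y := edist_comm _ _
  _ ≤ _ := h2

lemma stepS_nonempty (hF : ∀ t ∈ T, (F t).Nonempty ∧ IsCompact (F t)) {r s : ℝ} {A : Set M}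
    (hr : r ∈ T) (hs : s ∈ T) (hrs : r ≤ s) (hA : A.Nonempty) (hAF : A ⊆ F r) :
    (stepS T F r A s).Nonempty := by
  obtain ⟨a, ha⟩ := hA
  obtain ⟨y, hy, -⟩ := stepS_reach hF hr hs hrs hAF a ha
  exact ⟨y, hy⟩

lemma reachA_invariant (hF : ∀ t ∈ T, (F t).Nonempty ∧ IsCompact (F t)) :
    ∀ (l : List ℝ) (r : ℝ) (A : Set M), (r :: l).Chain' (· ≤ ·) → (∀ x ∈ l, x ∈ T) →
      r ∈ T → A.Nonempty → A ⊆ F r →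
      (reachA T F r A l).Nonempty ∧ reachA T F r A l ⊆ F (lastP r l) := by
  intro l
  induction l with
  | nil => exact fun r A _ _ _ hA hAF => ⟨hA, hAF⟩
  | cons s l ih =>
    intro r A hch hl hr hA hAF
    simp only [List.Chain', List.isChain_cons_cons] at hch
    have hs : s ∈ T := hl s (by simp)
    exact ih s (stepS T F r A s) hch.2 (fun x hx => hl x (by simp [hx])) hs
      (stepS_nonempty hF hr hs hch.1 hA hAF) stepS_subset

lemma reachA_walk (hF : ∀ t ∈ T, (F t).Nonempty ∧ IsCompact (F t)) :
    ∀ (l : List ℝ) (r : ℝ) (A : Set M), (r :: l).Chain' (· ≤ ·) → (∀ x ∈ l, x ∈ T) →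
      r ∈ T → A ⊆ F r →
      ∀ a ∈ A, ∃ z ∈ reachA T F r A l, edist a z ≤ vp T F r (lastP r l) := by
  intro l
  induction l with
  | nil =>
    intro r A _ _ _ _ a ha
    exact ⟨a, ha, by simp⟩
  | cons s l ih =>
    intro r A hch hl hr hAF a ha
    simp only [List.Chain', List.isChain_cons_cons] at hch
    have hs : s ∈ T := hl s (by simp)
    obtain ⟨y, hy, hay⟩ := stepS_reach hF hr hs hch.1 hAF a ha
    obtain ⟨z, hz, hyz⟩ := ih s (stepS T F r A s) hch.2 (fun x hx => hl x (by simp [hx]))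
      hs stepS_subset y hy
    refine ⟨z, hz, ?_⟩
    calc edist a z ≤ edist a y + edist y z := edist_triangle _ _ _
    _ ≤ vp T F r s + vp T F s (lastP s l) := add_le_add hay hyz
    _ ≤ vp T F r (lastP s l) := vp_superadd hch.1 (le_lastP hch.2)
    _ = vp T F r (lastP r (s :: l)) := by rw [lastP_cons]

lemma reachA_mono : ∀ (l : List ℝ) (r : ℝ) {A A' : Set M}, A ⊆ A' →
    reachA T F r A l ⊆ reachA T F r A' l := by
  intro l
  induction l with
  | nil => exact fun r A A' h => h
  | cons s l ih =>
    intro r A A' h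
    refine ih s ?_
    exact fun y hy => ⟨hy.1, le_trans (infEdist_anti h) hy.2⟩

lemma stepS_stepS_subset (hF : ∀ t ∈ T, (F t).Nonempty ∧ IsCompact (F t)) {r u v : ℝ}
    {A : Set M} (hr : r ∈ T) (hu : u ∈ T) (hru : r ≤ u) (huv : u ≤ v)
    (hA : A.Nonempty) (hAF : A ⊆ F r) :
    stepS T F u (stepS T F r A u) v ⊆ stepS T F r A v := by
  rintro y ⟨hyF, hyd⟩
  obtain ⟨w, hw, hew⟩ := (stepS_compact hF hu).exists_infEdist_eq_edist
    (stepS_nonempty hF hr hu hru hA hAF) y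
  refine ⟨hyF, ?_⟩
  calc infEdist y A ≤ edist y w + infEdist w A := infEdist_le_edist_add_infEdist
  _ ≤ vp T F u v + vp T F r u := add_le_add (hew ▸ hyd) hw.2
  _ = vp T F r u + vp T F u v := add_comm _ _
  _ ≤ vp T F r v := vp_superadd hru huv

lemma reachA_absorb (hF : ∀ t ∈ T, (F t).Nonempty ∧ IsCompact (F t)) {r u v : ℝ}
    {A : Set M} (m : List ℝ) (hr : r ∈ T) (hu : u ∈ T) (hru : r ≤ u) (huv : u ≤ v)
    (hA : A.Nonempty) (hAF : A ⊆ F r) :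
    reachA T F u (stepS T F r A u) (v :: m) ⊆ reachA T F r A (v :: m) := by
  rw [reachA_cons, reachA_cons]
  exact reachA_mono m v (stepS_stepS_subset hF hr hu hru huv hA hAF)

lemma reachA_refine (hF : ∀ t ∈ T, (F t).Nonempty ∧ IsCompact (F t)) :
    ∀ {l₁ l₂ : List ℝ}, l₁ <+ l₂ → ∀ (t r : ℝ) (A : Set M), r ∈ T → t ∈ T →
      A.Nonempty → A ⊆ F r → (r :: (l₂ ++ [t])).Chain' (· ≤ ·) → (∀ x ∈ l₂, x ∈ T) →
      reachA T F r A (l₂ ++ [t]) ⊆ reachA T F r A (l₁ ++ [t]) := by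
  intro l₁ l₂ h
  induction h with
  | slnil => exact fun t r A _ _ _ _ _ _ => subset_rfl
  | @cons l₁ l₂ u h ih =>
    intro t r A hr ht hA hAF hch hmem
    have hu : u ∈ T := hmem u (by simp)
    simp only [List.cons_append, List.Chain', List.isChain_cons_cons] at hch
    have hru : r ≤ u := hch.1
    obtain ⟨v, m, hvm⟩ : ∃ v m, l₂ ++ [t] = v :: m := by
      cases h' : l₂ ++ [t] with
      | nil => simp at h'
      | cons v m => exact ⟨v, m, rfl⟩
    have huv : u ≤ v := by
      have := hch.2
      rw [hvm, List.isChain_cons_cons] at this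
      exact this.1
    have hch' : (r :: (l₂ ++ [t])).Chain' (· ≤ ·) := by
      rw [hvm]; simp only [List.Chain', List.isChain_cons_cons]
      have := hch.2
      rw [hvm, List.isChain_cons_cons] at this
      exact ⟨hru.trans huv, this.2⟩
    have hmem' : ∀ x ∈ l₂, x ∈ T := fun x hx => hmem x (by simp [hx])
    calc reachA T F r A ((u :: l₂) ++ [t])
        = reachA T F u (stepS T F r A u) (l₂ ++ [t]) := by rw [List.cons_append, reachA_cons]
    _ ⊆ reachA T F r A (l₂ ++ [t]) := by
        rw [hvm]; exact reachA_absorb hF m hr hu hru huv hA hAF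
    _ ⊆ reachA T F r A (l₁ ++ [t]) := ih t r A hr ht hA hAF hch' hmem'
  | @cons_cons l₁ l₂ u h ih =>
    intro t r A hr ht hA hAF hch hmem
    have hu : u ∈ T := hmem u (by simp)
    simp only [List.cons_append, List.Chain', List.isChain_cons_cons] at hch
    rw [List.cons_append, List.cons_append, reachA_cons, reachA_cons]
    exact ih t u (stepS T F r A u) hu ht
      (stepS_nonempty hF hr hu hch.1 hA hAF) stepS_subset hch.2
      (fun x hx => hmem x (by simp [hx]))

end OneSided
section Construction

variable {M : Type*} [MetricSpace M]

def B0 (F : ℝ → Set M) (t₀ : ℝ) (X₀ : Set M) : Set M :=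
  {y | y ∈ F t₀ ∧ infEdist y X₀ ≤ exc X₀ (F t₀)}

def OkL (T : Set ℝ) (t₀ t : ℝ) (l : List ℝ) : Prop :=
  (t₀ :: (l ++ [t])).Chain' (· ≤ ·) ∧ ∀ x ∈ l, x ∈ T

def RtS (T : Set ℝ) (F : ℝ → Set M) (t₀ : ℝ) (X₀ : Set M) (t : ℝ) (l : List ℝ) : Set M :=
  reachA T F t₀ (B0 F t₀ X₀) (l ++ [t])

def Gp (T : Set ℝ) (F : ℝ → Set M) (t₀ : ℝ) (X₀ : Set M) (t : ℝ) : Set M :=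
  ⋂ l : {l : List ℝ // OkL T t₀ t l}, RtS T F t₀ X₀ t l.1

variable {T : Set ℝ} {F : ℝ → Set M} {t₀ t : ℝ} {X₀ : Set M} {l l₁ l₂ : List ℝ}

lemma OkL_nil (h : t₀ ≤ t) : OkL T t₀ t [] :=
  ⟨List.isChain_pair.mpr h, by simp⟩

lemma OkL.le (h : OkL T t₀ t l) : t₀ ≤ t := by
  have hp := List.isChain_iff_pairwise.mp h.1
  rw [List.pairwise_cons] at hp
  exact hp.1 t (by simp)

lemma OkL.bounds (h : OkL T t₀ t l) : ∀ x ∈ l, t₀ ≤ x ∧ x ≤ t := by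
  have hp := List.isChain_iff_pairwise.mp h.1
  rw [List.pairwise_cons] at hp
  intro x hx
  refine ⟨hp.1 x (by simp [hx]), ?_⟩
  exact (List.pairwise_append.mp hp.2).2.2 x hx t (by simp)

lemma OkL.sorted (h : OkL T t₀ t l) : l.Pairwise (· ≤ ·) := by
  have hp := List.isChain_iff_pairwise.mp h.1
  rw [List.pairwise_cons] at hp
  exact (List.pairwise_append.mp hp.2).1

lemma OkL_of (hT : ∀ x ∈ l, x ∈ T) (hst : t₀ ≤ t) (hs : l.Pairwise (· ≤ ·))
    (hb : ∀ x ∈ l, t₀ ≤ x ∧ x ≤ t) : OkL T t₀ t l := by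
  refine ⟨List.isChain_iff_pairwise.mpr ?_, hT⟩
  rw [List.pairwise_cons]
  constructor
  · intro y hy
    rcases List.mem_append.mp hy with h' | h'
    · exact (hb y h').1
    · rw [List.mem_singleton.mp h']; exact hst
  · rw [List.pairwise_append]
    refine ⟨hs, List.pairwise_singleton _ _, fun x hx y hy => ?_⟩
    rw [List.mem_singleton.mp hy]
    exact (hb x hx).2

variable (hF : ∀ t ∈ T, (F t).Nonempty ∧ IsCompact (F t)) (ht₀ : t₀ ∈ T)
  (hX₀ : X₀.Nonempty)

include hF ht₀ hX₀ in
lemma B0_nonempty : (B0 F t₀ X₀).Nonempty := by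
  obtain ⟨x, hx⟩ := hX₀
  obtain ⟨y, hy, hxy⟩ := (hF t₀ ht₀).2.exists_infEdist_eq_edist (hF t₀ ht₀).1 x
  have h1 : edist x y ≤ exc X₀ (F t₀) := hxy ▸ infEdist_le_exc hx
  refine ⟨y, hy, ?_⟩
  calc infEdist y X₀ ≤ edist y x := infEdist_le_edist_of_mem hx
  _ = edist x y := edist_comm _ _
  _ ≤ _ := h1

lemma B0_subset : B0 F t₀ X₀ ⊆ F t₀ := fun _ hy => hy.1

include hF ht₀ in
lemma B0_closed : IsClosed (B0 F t₀ X₀) :=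
  (hF t₀ ht₀).2.isClosed.inter (IsClosed.preimage continuous_infEdist isClosed_Iic)

include hF ht₀ in
lemma hausdorffEdist_X₀_B0 : hausdorffEdist X₀ (B0 F t₀ X₀) ≤ exc X₀ (F t₀) := by
  refine hausdorffEdist_le_of_infEdist (fun x hx => ?_) (fun y hy => hy.2)
  obtain ⟨y, hy, hxy⟩ := (hF t₀ ht₀).2.exists_infEdist_eq_edist (hF t₀ ht₀).1 x
  have h1 : edist x y ≤ exc X₀ (F t₀) := hxy ▸ infEdist_le_exc hx
  have hyB : y ∈ B0 F t₀ X₀ := by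
    refine ⟨hy, ?_⟩
    calc infEdist y X₀ ≤ edist y x := infEdist_le_edist_of_mem hx
    _ = edist x y := edist_comm _ _
    _ ≤ _ := h1
  exact le_trans (infEdist_le_edist_of_mem hyB) h1

include hF ht₀ hX₀ in
lemma RtS_spec (ht : t ∈ T) (h : OkL T t₀ t l) :
    (RtS T F t₀ X₀ t l).Nonempty ∧ IsCompact (RtS T F t₀ X₀ t l) ∧
      RtS T F t₀ X₀ t l ⊆ F t := by
  have hmem : ∀ x ∈ l ++ [t], x ∈ T := by
    intro x hx
    rcases List.mem_append.mp hx with h' | h'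
    · exact h.2 x h'
    · rw [List.mem_singleton.mp h']; exact ht
  have hinv := reachA_invariant hF (l ++ [t]) t₀ (B0 F t₀ X₀) h.1 hmem ht₀
    (B0_nonempty hF ht₀ hX₀) B0_subset
  rw [lastP_concat] at hinv
  refine ⟨hinv.1, ?_, hinv.2⟩
  have heq : RtS T F t₀ X₀ t l
      = stepS T F (lastP t₀ l) (reachA T F t₀ (B0 F t₀ X₀) l) t := by
    rw [RtS, reachA_append]
    rfl
  rw [heq]
  exact stepS_compact hF ht

include hF ht₀ hX₀ in
lemma RtS_mono (ht : t ∈ T) (h₂ : OkL T t₀ t l₂) (h₁₂ : l₁ <+ l₂) :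
    RtS T F t₀ X₀ t l₂ ⊆ RtS T F t₀ X₀ t l₁ :=
  reachA_refine hF h₁₂ t t₀ (B0 F t₀ X₀) ht₀ ht (B0_nonempty hF ht₀ hX₀) B0_subset h₂.1 h₂.2

lemma OkL_merge (h₁ : OkL T t₀ t l₁) (h₂ : OkL T t₀ t l₂) :
    ∃ l₃, OkL T t₀ t l₃ ∧ l₁ <+ l₃ ∧ l₂ <+ l₃ := by
  set l₃ := (l₁ ++ l₂).insertionSort (· ≤ ·) with hl₃
  have hperm : l₃ ~ l₁ ++ l₂ := List.perm_insertionSort _ _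
  have hsort : l₃.Pairwise (· ≤ ·) := List.pairwise_insertionSort _ _
  have hok : OkL T t₀ t l₃ := by
    refine OkL_of (fun x hx => ?_) h₁.le hsort (fun x hx => ?_)
    · rcases List.mem_append.mp (hperm.subset hx) with h' | h'
      · exact h₁.2 x h'
      · exact h₂.2 x h'
    · rcases List.mem_append.mp (hperm.subset hx) with h' | h'
      · exact h₁.bounds x h'
      · exact h₂.bounds x h'
  refine ⟨l₃, hok, ?_, ?_⟩
  · exact List.sublist_of_subperm_of_pairwise
      ((List.sublist_append_left l₁ l₂).subperm.trans hperm.symm.subperm) h₁.sorted hsort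
  · exact List.sublist_of_subperm_of_pairwise
      ((List.sublist_append_right l₁ l₂).subperm.trans hperm.symm.subperm) h₂.sorted hsort

lemma Gp_subset_RtS (hok : OkL T t₀ t l) : Gp T F t₀ X₀ t ⊆ RtS T F t₀ X₀ t l :=
  fun _ hy => mem_iInter.mp hy ⟨l, hok⟩

include hF ht₀ hX₀ in
lemma Gp_inter_nonempty (ht : t ∈ T) (htt : t₀ ≤ t) {C : Set M} (hC : IsClosed C)
    (hne : ∀ l, OkL T t₀ t l → (RtS T F t₀ X₀ t l ∩ C).Nonempty) :
    (Gp T F t₀ X₀ t ∩ C).Nonempty := by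
  have hni : Nonempty {l : List ℝ // OkL T t₀ t l} := ⟨⟨[], OkL_nil htt⟩⟩
  have hcpt : ∀ l : {l : List ℝ // OkL T t₀ t l},
      IsCompact (RtS T F t₀ X₀ t l.1 ∩ C) :=
    fun l => ((RtS_spec hF ht₀ hX₀ ht l.2).2.1).inter_right hC
  have key := IsCompact.nonempty_iInter_of_directed_nonempty_isCompact_isClosed
    (fun l : {l : List ℝ // OkL T t₀ t l} => RtS T F t₀ X₀ t l.1 ∩ C)
    ?_ (fun l => hne l.1 l.2) hcpt (fun l => (hcpt l).isClosed)
  · obtain ⟨y, hy⟩ := key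
    rw [mem_iInter] at hy
    exact ⟨y, mem_iInter.mpr fun l => (hy l).1, (hy ⟨[], OkL_nil htt⟩).2⟩
  · intro l₁ l₂
    obtain ⟨l₃, hok, hs₁, hs₂⟩ := OkL_merge l₁.2 l₂.2
    exact ⟨⟨l₃, hok⟩,
      inter_subset_inter_left _ (RtS_mono hF ht₀ hX₀ ht hok hs₁),
      inter_subset_inter_left _ (RtS_mono hF ht₀ hX₀ ht hok hs₂)⟩

include hF ht₀ hX₀ in
lemma Gp_spec (ht : t ∈ T) (htt : t₀ ≤ t) :
    (Gp T F t₀ X₀ t).Nonempty ∧ IsCompact (Gp T F t₀ X₀ t) ∧ Gp T F t₀ X₀ t ⊆ F t := by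
  have hsub : Gp T F t₀ X₀ t ⊆ F t :=
    subset_trans (Gp_subset_RtS (OkL_nil htt)) (RtS_spec hF ht₀ hX₀ ht (OkL_nil htt)).2.2
  have hcl : IsClosed (Gp T F t₀ X₀ t) :=
    isClosed_iInter fun l => (RtS_spec hF ht₀ hX₀ ht l.2).2.1.isClosed
  refine ⟨?_, IsCompact.of_isClosed_subset (hF t ht).2 hcl hsub, hsub⟩
  have := Gp_inter_nonempty hF ht₀ hX₀ ht htt isClosed_univ
    (fun l hok => by simpa using (RtS_spec hF ht₀ hX₀ ht hok).1)
  simpa using this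

lemma reachA_self_sub : ∀ (l : List ℝ) (A : Set M), (∀ x ∈ l, x = t₀) → A ⊆ F t₀ →
    A ⊆ reachA T F t₀ A l := by
  intro l
  induction l with
  | nil => exact fun A _ _ => subset_rfl
  | cons s l ih =>
    intro A h hAF
    have hs : s = t₀ := h s (by simp)
    subst hs
    have h1 : A ⊆ stepS T F s A s := fun y hy =>
      ⟨hAF hy, by rw [infEdist, infEdist_zero_of_mem hy]; exact zero_le⟩
    exact subset_trans h1 (ih (stepS T F s A s) (fun x hx => h x (by simp [hx])) stepS_subset)

include hF ht₀ in
lemma Gp_t₀ : Gp T F t₀ X₀ t₀ = B0 F t₀ X₀ := by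
  apply subset_antisymm
  · intro y hy
    have h1 : y ∈ RtS T F t₀ X₀ t₀ [] := Gp_subset_RtS (OkL_nil le_rfl) hy
    obtain ⟨hyF, hyd⟩ := h1
    rw [vp_diag] at hyd
    have hcl : y ∈ closure (B0 F t₀ X₀) :=
      EMetric.mem_closure_iff_infEdist_zero.mpr (le_antisymm hyd zero_le)
    rwa [(B0_closed hF ht₀).closure_eq] at hcl
  · intro y hy
    rw [Gp, mem_iInter]
    intro l
    have hall : ∀ x ∈ l.1 ++ [t₀], x = t₀ := by
      intro x hx
      rcases List.mem_append.mp hx with h' | h'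
      · exact le_antisymm (l.2.bounds x h').2 (l.2.bounds x h').1
      · exact List.mem_singleton.mp h'
    exact reachA_self_sub (l.1 ++ [t₀]) (B0 F t₀ X₀) hall B0_subset hy

end Construction
section Hausdorff

variable {M : Type*} [MetricSpace M] {T : Set ℝ} {F : ℝ → Set M} {t₀ : ℝ} {X₀ : Set M}

variable (hF : ∀ t ∈ T, (F t).Nonempty ∧ IsCompact (F t)) (ht₀ : t₀ ∈ T)
  (hX₀ : X₀.Nonempty)

include hF ht₀ hX₀ in
lemma Gp_hausdorff {s t : ℝ} (hs : s ∈ T) (ht : t ∈ T) (h₀s : t₀ ≤ s) (hst : s ≤ t) :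
    hausdorffEdist (Gp T F t₀ X₀ s) (Gp T F t₀ X₀ t) ≤ vp T F s t := by
  refine hausdorffEdist_le_of_infEdist ?_ ?_
  · -- forward excess: y ∈ Gp s
    intro y hy
    have key : (Gp T F t₀ X₀ t ∩ {z | edist y z ≤ vp T F s t}).Nonempty := by
      refine Gp_inter_nonempty hF ht₀ hX₀ ht (h₀s.trans hst)
        (isClosed_le (Continuous.edist continuous_const continuous_id) continuous_const) ?_
      intro l hok
      set a := l.filter (fun x => decide (x ≤ s)) with hadef
      set b := l.filter (fun x => !decide (x ≤ s)) with hbdef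
      have hmem_a : ∀ x ∈ a, x ∈ l ∧ x ≤ s := by
        intro x hx
        rw [hadef, List.mem_filter] at hx
        exact ⟨hx.1, of_decide_eq_true hx.2⟩
      have hmem_b : ∀ x ∈ b, x ∈ l ∧ s ≤ x := by
        intro x hx
        rw [hbdef, List.mem_filter] at hx
        refine ⟨hx.1, le_of_not_ge ?_⟩
        simpa using hx.2
      have hasort : a.Pairwise (· ≤ ·) := List.Pairwise.sublist List.filter_sublist hok.sorted
      have hbsort : b.Pairwise (· ≤ ·) := List.Pairwise.sublist List.filter_sublist hok.sorted
      have hsort' : (a ++ s :: b).Pairwise (· ≤ ·) := by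
        rw [List.pairwise_append]
        refine ⟨hasort, ?_, ?_⟩
        · rw [List.pairwise_cons]
          exact ⟨fun z hz => (hmem_b z hz).2, hbsort⟩
        · intro x hx z hz
          rcases List.mem_cons.mp hz with h' | h'
          · rw [h']; exact (hmem_a x hx).2
          · exact le_trans (hmem_a x hx).2 (hmem_b z h').2
      have hok' : OkL T t₀ t (a ++ s :: b) := by
        refine OkL_of ?_ hok.le hsort' ?_
        · intro x hx
          rcases List.mem_append.mp hx with h' | h'
          · exact hok.2 x (hmem_a x h').1
          · rcases List.mem_cons.mp h' with h'' | h''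
            · rw [h'']; exact hs
            · exact hok.2 x (hmem_b x h'').1
        · intro x hx
          rcases List.mem_append.mp hx with h' | h'
          · exact hok.bounds x (hmem_a x h').1
          · rcases List.mem_cons.mp h' with h'' | h''
            · rw [h'']; exact ⟨h₀s, hst⟩
            · exact hok.bounds x (hmem_b x h'').1
      have hsub : l <+ (a ++ s :: b) := by
        refine List.sublist_of_subperm_of_pairwise ⟨a ++ b, ?_, ?_⟩ hok.sorted hsort'
        · exact List.filter_append_perm _ l
        · exact List.Sublist.append_left (List.sublist_cons_self s b) a
      have hRt : RtS T F t₀ X₀ t (a ++ s :: b) ⊆ RtS T F t₀ X₀ t l :=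
        RtS_mono hF ht₀ hX₀ ht hok' hsub
      have hra : RtS T F t₀ X₀ t (a ++ s :: b)
          = reachA T F s (RtS T F t₀ X₀ s a) (b ++ [t]) := by
        rw [RtS]
        have heq : (a ++ s :: b) ++ [t] = (a ++ [s]) ++ (b ++ [t]) := by simp
        rw [heq, reachA_append, lastP_concat]
        rfl
      have hokas : OkL T t₀ s a := by
        refine OkL_of (fun x hx => hok.2 x (hmem_a x hx).1) h₀s hasort ?_
        exact fun x hx => ⟨(hok.bounds x (hmem_a x hx).1).1, (hmem_a x hx).2⟩
      have hyRa : y ∈ RtS T F t₀ X₀ s a := Gp_subset_RtS hokas hy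
      have hchain : (s :: (b ++ [t])).Chain' (· ≤ ·) := by
        simp only [List.Chain']; rw [List.isChain_iff_pairwise, List.pairwise_cons]
        constructor
        · intro z hz
          rcases List.mem_append.mp hz with h' | h'
          · exact (hmem_b z h').2
          · rw [List.mem_singleton.mp h']; exact hst
        · rw [List.pairwise_append]
          refine ⟨hbsort, List.pairwise_singleton _ _, fun x hx z hz => ?_⟩
          rw [List.mem_singleton.mp hz]
          exact (hok.bounds x (hmem_b x hx).1).2
      have hmemT : ∀ x ∈ b ++ [t], x ∈ T := by
        intro x hx
        rcases List.mem_append.mp hx with h' | h'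
        · exact hok.2 x (hmem_b x h').1
        · rw [List.mem_singleton.mp h']; exact ht
      obtain ⟨z, hz, hyz⟩ := reachA_walk hF (b ++ [t]) s (RtS T F t₀ X₀ s a) hchain hmemT hs
        (RtS_spec hF ht₀ hX₀ hs hokas).2.2 y hyRa
      rw [lastP_concat] at hyz
      exact ⟨z, hRt (hra ▸ hz), hyz⟩
    obtain ⟨z, hzG, hze⟩ := key
    exact le_trans (infEdist_le_edist_of_mem hzG) hze
  · -- backward excess: z ∈ Gp t
    intro z hz
    have key : (Gp T F t₀ X₀ s ∩ {y | edist z y ≤ vp T F s t}).Nonempty := by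
      refine Gp_inter_nonempty hF ht₀ hX₀ hs h₀s
        (isClosed_le (Continuous.edist continuous_const continuous_id) continuous_const) ?_
      intro l hok
      have hsort' : (l ++ [s]).Pairwise (· ≤ ·) := by
        rw [List.pairwise_append]
        refine ⟨hok.sorted, List.pairwise_singleton _ _, fun x hx y' hy' => ?_⟩
        rw [List.mem_singleton.mp hy']
        exact (hok.bounds x hx).2
      have hok' : OkL T t₀ t (l ++ [s]) := by
        refine OkL_of ?_ (h₀s.trans hst) hsort' ?_
        · intro x hx
          rcases List.mem_append.mp hx with h' | h'
          · exact hok.2 x h'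
          · rw [List.mem_singleton.mp h']; exact hs
        · intro x hx
          rcases List.mem_append.mp hx with h' | h'
          · exact ⟨(hok.bounds x h').1, (hok.bounds x h').2.trans hst⟩
          · rw [List.mem_singleton.mp h']; exact ⟨h₀s, hst⟩
      have hz' : z ∈ RtS T F t₀ X₀ t (l ++ [s]) := Gp_subset_RtS hok' hz
      have heq : RtS T F t₀ X₀ t (l ++ [s]) = stepS T F s (RtS T F t₀ X₀ s l) t := by
        rw [RtS, reachA_append, lastP_concat]
        rfl
      rw [heq] at hz'
      obtain ⟨hzF, hzd⟩ := hz'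
      obtain ⟨y, hyR, hey⟩ := ((RtS_spec hF ht₀ hX₀ hs hok).2.1).exists_infEdist_eq_edist
        (RtS_spec hF ht₀ hX₀ hs hok).1 z
      exact ⟨y, hyR, by rw [mem_setOf_eq, ← hey]; exact hzd⟩
    obtain ⟨y, hyG, hye⟩ := key
    exact le_trans (infEdist_le_edist_of_mem hyG) hye

end Hausdorff
lemma one_sided {M : Type*} [MetricSpace M] (T : Set ℝ) (F : ℝ → Set M)
    (hF : ∀ t ∈ T, (F t).Nonempty ∧ IsCompact (F t))
    (t₀ : ℝ) (ht₀ : t₀ ∈ T) (X₀ : Set M) (hX₀ : X₀.Nonempty) :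
    ∃ Γ : ℝ → Set M,
      (∀ t ∈ T, t₀ ≤ t → (Γ t).Nonempty ∧ IsCompact (Γ t) ∧ Γ t ⊆ F t) ∧
      Γ t₀ = {y | y ∈ F t₀ ∧ infEdist y X₀ ≤ exc X₀ (F t₀)} ∧
      (∀ s ∈ T, ∀ t ∈ T, t₀ ≤ s → s ≤ t →
        hausdorffEdist (Γ s) (Γ t) ≤ varPlus F (T ∩ Icc s t)) :=
  ⟨Gp T F t₀ X₀,
    fun t ht htt => Gp_spec hF ht₀ hX₀ ht htt,
    Gp_t₀ hF ht₀,
    fun s hs t ht h₀s hst => Gp_hausdorff hF ht₀ hX₀ hs ht h₀s hst⟩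

theorem exists_selector_of_bounded_variation' {M : Type*} [MetricSpace M]
    (T : Set ℝ) (F : ℝ → Set M) (hF : ∀ t ∈ T, (F t).Nonempty ∧ IsCompact (F t))
    (t₀ : ℝ) (ht₀ : t₀ ∈ T) (X₀ : Set M) (hX₀ : X₀.Nonempty) :
    ∃ Γ : ℝ → Set M,
      (∀ t ∈ T, (Γ t).Nonempty ∧ IsCompact (Γ t) ∧ Γ t ⊆ F t) ∧
      EMetric.hausdorffEdist X₀ (Γ t₀) ≤ exc X₀ (F t₀) ∧
      varH Γ T ≤ varPlus F (T ∩ Set.Ici t₀) + varMinus F (T ∩ Set.Iic t₀) ∧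
      varPlus F (T ∩ Set.Ici t₀) + varMinus F (T ∩ Set.Iic t₀) ≤ varH F T := by
  obtain ⟨P, hP1, hP2, hP3⟩ := one_sided T F hF t₀ ht₀ X₀ hX₀
  set F' : ℝ → Set M := fun x => F (2 * t₀ - x) with hF'def
  set T' : Set ℝ := (fun x : ℝ => 2 * t₀ - x) ⁻¹' T with hT'def
  have e0 : 2 * t₀ - t₀ = t₀ := by ring
  have hF' : ∀ x ∈ T', (F' x).Nonempty ∧ IsCompact (F' x) := fun x hx => hF _ hx
  have ht₀' : t₀ ∈ T' := by
    simp only [hT'def, mem_preimage, e0]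
    exact ht₀
  obtain ⟨Q, hQ1, hQ2, hQ3⟩ := one_sided T' F' hF' t₀ ht₀' X₀ hX₀
  set N : ℝ → Set M := fun x => Q (2 * t₀ - x) with hNdef
  set Γ : ℝ → Set M := fun x => if t₀ ≤ x then P x else N x with hΓdef
  have hmemT' : ∀ x ∈ T, (2 * t₀ - x) ∈ T' := by
    intro x hx
    simp only [hT'def, mem_preimage]
    have : 2 * t₀ - (2 * t₀ - x) = x := by ring
    rw [this]
    exact hx
  have hB : P t₀ = N t₀ := by
    rw [hP2]
    simp only [hNdef, e0]
    rw [hQ2]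
    simp only [hF'def, e0]
  have hΓP : ∀ x, t₀ ≤ x → Γ x = P x := by
    intro x hx; simp only [hΓdef, if_pos hx]
  have hΓN : ∀ x, x ≤ t₀ → Γ x = N x := by
    intro x hx
    by_cases h : t₀ ≤ x
    · have hxe : x = t₀ := le_antisymm hx h
      subst hxe
      simp only [hΓdef, if_pos h]
      exact hB
    · simp only [hΓdef, if_neg h]
  -- the backward Hausdorff estimate
  have hmN : ∀ a ∈ T, ∀ b ∈ T, a ≤ b → b ≤ t₀ →
      hausdorffEdist (N a) (N b) ≤ varMinus F (T ∩ Icc a b) := by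
    intro a ha b hb hab hb0
    have h1 : t₀ ≤ 2 * t₀ - b := by linarith
    have h2 : 2 * t₀ - b ≤ 2 * t₀ - a := by linarith
    have hset : T' ∩ Icc (2 * t₀ - b) (2 * t₀ - a)
        = (fun x : ℝ => 2 * t₀ - x) ⁻¹' (T ∩ Icc a b) := by
      ext x
      simp only [hT'def, mem_inter_iff, mem_preimage, mem_Icc]
      constructor
      · rintro ⟨hxT, hx1, hx2⟩
        exact ⟨hxT, by linarith, by linarith⟩
      · rintro ⟨hxT, hx1, hx2⟩
        exact ⟨hxT, by linarith, by linarith⟩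
    calc hausdorffEdist (N a) (N b) = hausdorffEdist (Q (2 * t₀ - b)) (Q (2 * t₀ - a)) := by
          rw [hNdef]; exact hausdorffEdist_comm
    _ ≤ varPlus F' (T' ∩ Icc (2 * t₀ - b) (2 * t₀ - a)) :=
          hQ3 _ (hmemT' b hb) _ (hmemT' a ha) h1 h2
    _ = varPlus F' ((fun x : ℝ => 2 * t₀ - x) ⁻¹' (T ∩ Icc a b)) := by rw [hset]
    _ ≤ varMinus F (T ∩ Icc a b) := varPlus_reflect F (T ∩ Icc a b) (2 * t₀)
  -- the cross bound
  have hcross : ∀ a ∈ T, ∀ b ∈ T, a ≤ b → hausdorffEdist (Γ a) (Γ b) ≤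
      varPlus F (T ∩ Icc (max a t₀) (max b t₀)) + varMinus F (T ∩ Icc (min a t₀) (min b t₀)) := by
    intro a ha b hb hab
    rcases le_total t₀ a with h | h
    · rw [hΓP a h, hΓP b (h.trans hab), max_eq_left h, max_eq_left (h.trans hab)]
      exact le_trans (hP3 a ha b hb h hab) le_self_add
    · rcases le_total b t₀ with h' | h'
      · rw [hΓN a (hab.trans h'), hΓN b h', min_eq_left (hab.trans h'), min_eq_left h']
        exact le_trans (hmN a ha b hb hab h') le_add_self
      · rw [max_eq_right h, max_eq_left h', min_eq_left h, min_eq_right h']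
        calc hausdorffEdist (Γ a) (Γ b)
            ≤ hausdorffEdist (Γ a) (Γ t₀) + hausdorffEdist (Γ t₀) (Γ b) :=
              hausdorffEdist_triangle
        _ ≤ varMinus F (T ∩ Icc a t₀) + varPlus F (T ∩ Icc t₀ b) := by
              refine add_le_add ?_ ?_
              · rw [hΓN a h, hΓN t₀ le_rfl]
                exact hmN a ha t₀ ht₀ h le_rfl
              · rw [hΓP t₀ le_rfl, hΓP b h']
                exact hP3 t₀ ht₀ b hb le_rfl h'
        _ = varPlus F (T ∩ Icc t₀ b) + varMinus F (T ∩ Icc a t₀) := add_comm _ _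
  refine ⟨Γ, ?_, ?_, ?_, ?_⟩
  · -- selector properties
    intro t ht
    rcases le_total t₀ t with h | h
    · rw [hΓP t h]
      exact hP1 t ht h
    · rw [hΓN t h]
      have h1 : t₀ ≤ 2 * t₀ - t := by linarith
      have := hQ1 _ (hmemT' t ht) h1
      refine ⟨this.1, this.2.1, ?_⟩
      have he : 2 * t₀ - (2 * t₀ - t) = t := by ring
      have h2 := this.2.2
      simp only [hF'def, he] at h2
      exact h2
  · -- distance at t₀
    rw [hΓP t₀ le_rfl, hP2]
    exact hausdorffEdist_X₀_B0 hF ht₀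
  · -- variation bound for Γ
    refine iSup_le fun p => ?_
    obtain ⟨⟨n, u⟩, hu, huT⟩ := p
    have step1 : ∑ i ∈ Finset.range n, hausdorffEdist (Γ (u i)) (Γ (u (i + 1)))
        ≤ ∑ i ∈ Finset.range n,
            (varPlus F (T ∩ Icc (max (u i) t₀) (max (u (i + 1)) t₀)) +
             varMinus F (T ∩ Icc (min (u i) t₀) (min (u (i + 1)) t₀))) :=
      Finset.sum_le_sum fun i _ => hcross _ (huT i) _ (huT (i + 1)) (hu (Nat.le_succ i))
    refine le_trans step1 ?_
    rw [Finset.sum_add_distrib]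
    refine add_le_add ?_ ?_
    · have hseq : ∀ i, T ∩ Icc (max (u i) t₀) (max (u (i + 1)) t₀)
          = (T ∩ Ici t₀) ∩ Icc (max (u i) t₀) (max (u (i + 1)) t₀) := by
        intro i
        ext x
        simp only [mem_inter_iff, mem_Icc, mem_Ici]
        constructor
        · rintro ⟨hxT, hx1, hx2⟩
          exact ⟨⟨hxT, le_trans (le_max_right _ _) hx1⟩, hx1, hx2⟩
        · rintro ⟨⟨hxT, _⟩, hx1, hx2⟩
          exact ⟨hxT, hx1, hx2⟩
      calc ∑ i ∈ Finset.range n, varPlus F (T ∩ Icc (max (u i) t₀) (max (u (i + 1)) t₀))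
          = ∑ i ∈ Finset.range n,
              varPlus F ((T ∩ Ici t₀) ∩ Icc (max (u i) t₀) (max (u (i + 1)) t₀)) := by
            exact Finset.sum_congr rfl fun i _ => by rw [hseq i]
      _ ≤ varPlus F (T ∩ Ici t₀) := by
            refine sum_varBy_le ?_ ?_ n
            · exact fun i j hij => max_le_max (hu hij) le_rfl
            · intro i
              rcases le_total (u i) t₀ with h | h
              · rw [max_eq_right h]; exact ⟨ht₀, mem_Ici.mpr le_rfl⟩
              · rw [max_eq_left h]; exact ⟨huT i, h⟩
    · have hseq : ∀ i, T ∩ Icc (min (u i) t₀) (min (u (i + 1)) t₀)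
          = (T ∩ Iic t₀) ∩ Icc (min (u i) t₀) (min (u (i + 1)) t₀) := by
        intro i
        ext x
        simp only [mem_inter_iff, mem_Icc, mem_Iic]
        constructor
        · rintro ⟨hxT, hx1, hx2⟩
          exact ⟨⟨hxT, le_trans hx2 (min_le_right _ _)⟩, hx1, hx2⟩
        · rintro ⟨⟨hxT, _⟩, hx1, hx2⟩
          exact ⟨hxT, hx1, hx2⟩
      calc ∑ i ∈ Finset.range n, varMinus F (T ∩ Icc (min (u i) t₀) (min (u (i + 1)) t₀))
          = ∑ i ∈ Finset.range n,
              varMinus F ((T ∩ Iic t₀) ∩ Icc (min (u i) t₀) (min (u (i + 1)) t₀)) := by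
            exact Finset.sum_congr rfl fun i _ => by rw [hseq i]
      _ ≤ varMinus F (T ∩ Iic t₀) := by
            refine sum_varBy_le ?_ ?_ n
            · exact fun i j hij => min_le_min (hu hij) le_rfl
            · intro i
              rcases le_total (u i) t₀ with h | h
              · rw [min_eq_left h]; exact ⟨huT i, h⟩
              · rw [min_eq_right h]; exact ⟨ht₀, mem_Iic.mpr le_rfl⟩
  · -- comparison with varH F T
    have h1 : varPlus F (T ∩ Ici t₀) ≤ varH F (T ∩ Ici t₀) :=
      varBy_mono_D fun a _ b _ _ => exc_le_hausdorffEdist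
    have h2 : varMinus F (T ∩ Iic t₀) ≤ varH F (T ∩ Iic t₀) :=
      varBy_mono_D fun a _ b _ _ => exc_rev_le_hausdorffEdist
    refine le_trans (add_le_add h1 h2) ?_
    rw [add_comm]
    exact varBy_superadd inter_subset_left inter_subset_left
      (fun x hx y hy => hx.2.trans hy.2)

/-- Theorem A (with the refined bound): a multifunction of bounded variation admits a
compact-valued selector Γ with d_H(X₀,Γ(t₀)) ≤ e(X₀,F(t₀)) and
V(Γ,T) ≤ V⁺(F,T∩[t₀,∞)) + V⁻(F,T∩(-∞,t₀]) ≤ V(F,T). -/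
theorem exists_selector_of_bounded_variation {M : Type*} [MetricSpace M]
    (T : Set ℝ) (F : ℝ → Set M) (hF : ∀ t ∈ T, (F t).Nonempty ∧ IsCompact (F t))
    (hV : varH F T < ⊤)
    (t₀ : ℝ) (ht₀ : t₀ ∈ T) (X₀ : Set M) (hX₀ : X₀.Nonempty) (hX₀c : IsCompact X₀) :
    ∃ Γ : ℝ → Set M,
      (∀ t ∈ T, (Γ t).Nonempty ∧ IsCompact (Γ t) ∧ Γ t ⊆ F t) ∧
      EMetric.hausdorffEdist X₀ (Γ t₀) ≤ exc X₀ (F t₀) ∧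
      varH Γ T ≤ varPlus F (T ∩ Set.Ici t₀) + varMinus F (T ∩ Set.Iic t₀) ∧
      varPlus F (T ∩ Set.Ici t₀) + varMinus F (T ∩ Set.Iic t₀) ≤ varH F T := by
  exact exists_selector_of_bounded_variation' T F hF t₀ ht₀ X₀ hX₀
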